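/- Under the one-factor model Σ = σ²ββᵀ + Δ with β₁ ≤ ⋯ ≤ β_p, δ_i² > 0, σ² > 0 and Σ_{j=1}^p β_j/δ_j² ≥ 0, let w^L be the LOMV solution with active set K = {1,…,k} where k < p (so the long-only constraints bind on some asset). Suppose q > 0 additional assets are appended, each with idiosyncratic variance > 0 and with beta greater than or equal to β_{k+1}, producing the enlarged ordered one-factor market of p + q assets. Then the active set K and the weights of the active assets in the LOMV solution of the enlarged problem are the same as in the original problem (the new LOMV solution assigns the original weights to assets 1,…,k and zero to all other assets). -/

import Mathlib

open Matrix Finset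

lemma quad_form_eq' {n : ℕ} (σsq : ℝ) (b d : Fin n → ℝ) (v : Fin n → ℝ) :
    ∑ i, ∑ j, v i * ((σsq • Matrix.vecMulVec b b + Matrix.diagonal d) i j) * v j
      = σsq * (∑ i, b i * v i)^2 + ∑ i, d i * (v i)^2 := by
  have h : ∀ i j : Fin n,
      v i * ((σsq • Matrix.vecMulVec b b + Matrix.diagonal d) i j) * v j
        = σsq * ((b i * v i) * (b j * v j)) + (if i = j then d i * (v i)^2 else 0) := by
    intro i j
    by_cases hij : i = j
    · subst hij
      simp [Matrix.vecMulVec_apply, Matrix.diagonal_apply_eq]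
      ring
    · simp [Matrix.vecMulVec_apply, Matrix.diagonal_apply_ne _ hij, hij]
      ring
  simp_rw [h, Finset.sum_add_distrib, Finset.sum_ite_eq, Finset.mem_univ, if_true,
    ← Finset.mul_sum, ← Finset.sum_mul]
  ring

lemma small_t_lemma (lam g c : ℝ) (hc : 0 ≤ c)
    (h : ∀ t : ℝ, 0 < t → t ≤ 1 → 0 ≤ 2*t*(g - lam) + t^2*c) : lam ≤ g := by
  by_contra hlt
  push_neg at hlt
  have h1 : 0 < (lam - g)/(1+c) := div_pos (by linarith) (by linarith)
  set t := min 1 ((lam - g)/(1+c)) with ht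
  have ht0 : 0 < t := lt_min one_pos h1
  have ht1 : t ≤ 1 := min_le_left _ _
  have h2 := h t ht0 ht1
  have htc : t * c ≤ lam - g := by
    have h3 : t ≤ (lam - g)/(1+c) := min_le_right _ _
    have h4 : t * c ≤ ((lam - g)/(1+c)) * c := mul_le_mul_of_nonneg_right h3 hc
    have h5 : ((lam - g)/(1+c)) * c ≤ lam - g := by
      rw [div_mul_eq_mul_div, div_le_iff₀ (by linarith : (0:ℝ) < 1 + c)]
      nlinarith
    linarith
  nlinarith [mul_le_mul_of_nonneg_left htc (le_of_lt ht0)]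

lemma quad_expand {n : ℕ} (d u e : Fin n → ℝ) (t : ℝ) :
    ∑ i, d i * (u i + t*(e i - u i))^2
      = ∑ i, d i * (u i)^2 + 2*t*(∑ i, d i * (u i * (e i - u i)))
        + t^2 * ∑ i, d i * (e i - u i)^2 := by
  rw [Finset.mul_sum, Finset.mul_sum, ← Finset.sum_add_distrib, ← Finset.sum_add_distrib]
  exact Finset.sum_congr rfl (fun i _ => by ring)

lemma lin_expand {n : ℕ} (b u e : Fin n → ℝ) (t : ℝ) :
    ∑ i, b i * (u i + t*(e i - u i))
      = (∑ i, b i * u i) + t * ((∑ i, b i * e i) - (∑ i, b i * u i)) := by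
  rw [mul_sub, Finset.mul_sum, Finset.mul_sum, ← Finset.sum_sub_distrib,
    ← Finset.sum_add_distrib]
  exact Finset.sum_congr rfl (fun i _ => by ring)

lemma quad_expand1 {n : ℕ} (d u v : Fin n → ℝ) :
    ∑ i, d i * (v i)^2
      = ∑ i, d i * (u i)^2 + 2*(∑ i, d i * (u i * (v i - u i)))
        + ∑ i, d i * (v i - u i)^2 := by
  rw [Finset.mul_sum, ← Finset.sum_add_distrib, ← Finset.sum_add_distrib]
  exact Finset.sum_congr rfl (fun i _ => by ring)

set_option maxHeartbeats 1000000 in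
/-- **Corollary of Theorem 1.** Under the one-factor model with ordered
betas, positive idiosyncratic variances and the sign convention `∑ βⱼ/δⱼ² ≥ 0`,
suppose the LOMV solution `w` has active set `K = {1,…,k}` with `k < p`.  If `q > 0`
additional assets with positive idiosyncratic variances and betas `≥ β_{k+1}` are
appended to the market, then the LOMV solution of the enlarged `(p+q)`-asset problem
assigns the original weights to the first `k` assets and zero to all other assets;
in particular the active set and the active weights are unchanged. -/
theorem lomv_unaffected_by_adding_high_beta_assets {p q : ℕ} (hp : 0 < p) (hq : 0 < q)
    (σsq : ℝ) (hσ : 0 < σsq)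
    (β δsq : Fin p → ℝ) (hδ : ∀ i, 0 < δsq i)
    (hmono : Monotone β)
    (hsign : 0 ≤ ∑ j, β j / δsq j)
    (S : Matrix (Fin p) (Fin p) ℝ)
    (hS : S = σsq • Matrix.vecMulVec β β + Matrix.diagonal δsq)
    -- w is the (unique) LOMV solution for the original p-asset market
    (w : Fin p → ℝ)
    (hsum : ∑ i, w i = 1)
    (hnonneg : ∀ i, 0 ≤ w i)
    (hmin : ∀ v : Fin p → ℝ, (∑ i, v i = 1) → (∀ i, 0 ≤ v i) →
      ∑ i, ∑ j, w i * S i j * w j ≤ ∑ i, ∑ j, v i * S i j * v j)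
    -- its active set is K = {1,…,k} with k < p (the constraints bind somewhere)
    (k : ℕ) (hk : k < p)
    (hact : ∀ i : Fin p, 0 < w i ↔ (i : ℕ) < k)
    -- q new assets, each with positive idiosyncratic variance and beta ≥ β_{k+1}
    (γ δsq' : Fin q → ℝ) (hδ' : ∀ j, 0 < δsq' j)
    (hγ : ∀ j, β ⟨k, hk⟩ ≤ γ j)
    (S' : Matrix (Fin (p + q)) (Fin (p + q)) ℝ)
    (hS' : S' = σsq • Matrix.vecMulVec (Fin.append β γ) (Fin.append β γ)
        + Matrix.diagonal (Fin.append δsq δsq')) :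
    -- the vector extending w by zeros is the LOMV solution of the enlarged market
    (∑ i, Fin.append w (fun _ : Fin q => (0 : ℝ)) i = 1)
    ∧ (∀ i, 0 ≤ Fin.append w (fun _ : Fin q => (0 : ℝ)) i)
    ∧ (∀ v : Fin (p + q) → ℝ, (∑ i, v i = 1) → (∀ i, 0 ≤ v i) →
        ∑ i, ∑ j, Fin.append w (fun _ : Fin q => (0 : ℝ)) i * S' i j
            * Fin.append w (fun _ : Fin q => (0 : ℝ)) j
          ≤ ∑ i, ∑ j, v i * S' i j * v j) := by
  classical
  subst hS hS'
  simp only [quad_form_eq'] at hmin ⊢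
  set B := ∑ i, β i * w i with hB
  set lam := σsq * B^2 + ∑ i, δsq i * (w i)^2 with hlam
  -- variational inequality for the original problem
  have hVI : ∀ i₀ : Fin p, lam ≤ σsq * β i₀ * B + δsq i₀ * w i₀ := by
    intro i₀
    set e : Fin p → ℝ := fun i => if i = i₀ then 1 else 0 with he
    have hbe : ∑ i, β i * e i = β i₀ := by
      simp [he, mul_ite, mul_one, mul_zero, Finset.sum_ite_eq']
    have hdwe : ∑ i, δsq i * (w i * (e i - w i))
        = δsq i₀ * w i₀ - ∑ i, δsq i * (w i)^2 := by
      have hterm : ∀ i : Fin p, δsq i * (w i * (e i - w i))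
          = (if i = i₀ then δsq i * w i else 0) - δsq i * (w i)^2 := by
        intro i
        simp only [he]
        by_cases h : i = i₀
        · simp only [if_pos h]; ring
        · simp only [if_neg h]; ring
      rw [Finset.sum_congr rfl (fun i _ => hterm i), Finset.sum_sub_distrib,
        Finset.sum_ite_eq', if_pos (Finset.mem_univ i₀)]
    have hc : 0 ≤ σsq*(β i₀ - B)^2 + ∑ i, δsq i * (e i - w i)^2 := by
      have h1 : 0 ≤ ∑ i, δsq i * (e i - w i)^2 :=
        Finset.sum_nonneg fun i _ => mul_nonneg (hδ i).le (sq_nonneg _)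
      nlinarith [sq_nonneg (β i₀ - B), hσ.le]
    apply small_t_lemma lam _ _ hc
    intro t ht0 ht1
    have hvsum : ∑ i, (w i + t*(e i - w i)) = 1 := by
      rw [Finset.sum_add_distrib, ← Finset.mul_sum, Finset.sum_sub_distrib, hsum]
      have : ∑ i, e i = 1 := by simp [he]
      rw [this]; ring
    have hvnn : ∀ i, 0 ≤ w i + t*(e i - w i) := by
      intro i
      by_cases h : i = i₀
      · simp only [he, h, if_pos rfl]
        nlinarith [hnonneg i₀]
      · simp only [he, if_neg h]
        nlinarith [hnonneg i]
    have h2 : σsq * (∑ i, β i * w i)^2 + ∑ i, δsq i * (w i)^2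
        ≤ σsq * (∑ i, β i * (w i + t*(e i - w i)))^2
          + ∑ i, δsq i * (w i + t*(e i - w i))^2 :=
      hmin (fun i => w i + t*(e i - w i)) hvsum hvnn
    rw [lin_expand β w e t, quad_expand δsq w e t, hbe, hdwe, ← hB] at h2
    nlinarith [h2]
  -- positivity of lambda
  have hex : ∃ i, w i ≠ 0 := by
    by_contra h
    push_neg at h
    simp [h] at hsum
  obtain ⟨i₁, hi₁⟩ := hex
  have hlam_pos : 0 < lam := by
    have h1 : 0 < ∑ i, δsq i * (w i)^2 :=
      Finset.sum_pos' (fun i _ => mul_nonneg (hδ i).le (sq_nonneg _))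
        ⟨i₁, Finset.mem_univ _, mul_pos (hδ i₁) (by positivity)⟩
    nlinarith [sq_nonneg B, hσ.le]
  -- the last asset has zero weight
  have hzero : ∀ i : Fin p, k ≤ (i : ℕ) → w i = 0 := by
    intro i hi
    have h1 : ¬ 0 < w i := by rw [hact]; omega
    linarith [hnonneg i]
  -- B ≥ 0
  have hBnn : 0 ≤ B := by
    by_contra hBneg
    push_neg at hBneg
    set L : Fin p := ⟨p - 1, by omega⟩ with hL
    have hwL : w L = 0 := hzero L (by simp [hL]; omega)
    have hA := hVI L
    rw [hwL, mul_zero, add_zero] at hA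
    have hβL : β L < 0 := by
      by_contra h
      push_neg at h
      nlinarith [mul_nonneg hσ.le h, hA, hlam_pos]
    have hall : ∀ j : Fin p, β j < 0 := by
      intro j
      have hjL : j ≤ L := by
        rw [Fin.le_def]
        have := j.isLt
        simp [hL]
        omega
      exact lt_of_le_of_lt (hmono hjL) hβL
    have hneg : ∑ j, β j / δsq j < 0 :=
      Finset.sum_neg (fun j _ => div_neg_of_neg_of_pos (hall j) (hδ j))
        ⟨L, Finset.mem_univ L⟩
    linarith
  -- the k-th asset
  have hwk : w ⟨k, hk⟩ = 0 := hzero _ (le_refl k)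
  have hgk : lam ≤ σsq * β ⟨k, hk⟩ * B := by
    have := hVI ⟨k, hk⟩
    rw [hwk, mul_zero, add_zero] at this
    exact this
  -- the variational inequality for the enlarged problem
  have hVI' : ∀ i : Fin (p + q),
      lam ≤ σsq * Fin.append β γ i * B
        + Fin.append δsq δsq' i * Fin.append w (fun _ : Fin q => (0:ℝ)) i := by
    intro i
    refine Fin.addCases (fun i0 => ?_) (fun j => ?_) i
    · simp only [Fin.append_left]
      exact hVI i0
    · simp only [Fin.append_right, mul_zero, add_zero]
      have h1 : 0 ≤ σsq * ((γ j - β ⟨k, hk⟩) * B) :=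
        mul_nonneg hσ.le (mul_nonneg (sub_nonneg.mpr (hγ j)) hBnn)
      nlinarith [hgk]
  -- positivity of the enlarged idiosyncratic variances
  have hd'pos : ∀ i : Fin (p + q), 0 < Fin.append δsq δsq' i := by
    intro i
    refine Fin.addCases (fun i0 => ?_) (fun j => ?_) i
    · simp only [Fin.append_left]; exact hδ i0
    · simp only [Fin.append_right]; exact hδ' j
  -- sums over appended vectors
  have hw'sum : ∑ i, Fin.append w (fun _ : Fin q => (0:ℝ)) i = 1 := by
    rw [Fin.sum_univ_add]
    simp [Fin.append_left, Fin.append_right, hsum]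
  have hBeq : ∑ i, Fin.append β γ i * Fin.append w (fun _ : Fin q => (0:ℝ)) i = B := by
    rw [Fin.sum_univ_add]
    simp [Fin.append_left, Fin.append_right, hB]
  have hdw2 : ∑ i, Fin.append δsq δsq' i * (Fin.append w (fun _ : Fin q => (0:ℝ)) i)^2
      = ∑ i, δsq i * (w i)^2 := by
    rw [Fin.sum_univ_add]
    simp [Fin.append_left, Fin.append_right]
  have hw'nn : ∀ i, 0 ≤ Fin.append w (fun _ : Fin q => (0:ℝ)) i := by
    intro i
    refine Fin.addCases (fun i0 => ?_) (fun j => ?_) i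
    · simp only [Fin.append_left]; exact hnonneg i0
    · simp only [Fin.append_right]; exact le_rfl
  refine ⟨hw'sum, hw'nn, ?_⟩
  intro v hv1 hv2
  rw [hBeq, hdw2, ← hlam]
  -- abbreviations for the enlarged market
  set b' := Fin.append β γ with hb'
  set d' := Fin.append δsq δsq' with hd'
  set w' := Fin.append w (fun _ : Fin q => (0:ℝ)) with hw'
  set T := ∑ i, b' i * v i with hT
  -- the gradient bound
  have hg : ∀ i, lam ≤ σsq * b' i * B + d' i * w' i := hVI'
  have hvg : lam ≤ ∑ i, v i * (σsq * b' i * B + d' i * w' i) := by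
    calc lam = ∑ i, v i * lam := by rw [← Finset.sum_mul, hv1, one_mul]
    _ ≤ ∑ i, v i * (σsq * b' i * B + d' i * w' i) :=
        Finset.sum_le_sum fun i _ => mul_le_mul_of_nonneg_left (hg i) (hv2 i)
  have hwg : ∑ i, w' i * (σsq * b' i * B + d' i * w' i) = lam := by
    have h1 : ∑ i, w' i * (σsq * b' i * B + d' i * w' i)
        = σsq * B * (∑ i, b' i * w' i) + ∑ i, d' i * (w' i)^2 := by
      rw [Finset.mul_sum, ← Finset.sum_add_distrib]
      exact Finset.sum_congr rfl fun i _ => by ring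
    rw [h1, hBeq, hdw2, hlam]
    ring
  have hsplit : ∑ i, (v i - w' i) * (σsq * b' i * B + d' i * w' i)
      = (∑ i, v i * (σsq * b' i * B + d' i * w' i))
        - ∑ i, w' i * (σsq * b' i * B + d' i * w' i) := by
    rw [← Finset.sum_sub_distrib]
    exact Finset.sum_congr rfl fun i _ => by ring
  have hcrossid : ∑ i, (v i - w' i) * (σsq * b' i * B + d' i * w' i)
      = σsq * B * T - σsq * B * B + ∑ i, d' i * (w' i * (v i - w' i)) := by
    have h1 : ∑ i, (v i - w' i) * (σsq * b' i * B + d' i * w' i)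
        = ∑ i, (σsq * B * (b' i * v i) - σsq * B * (b' i * w' i)
            + d' i * (w' i * (v i - w' i))) :=
      Finset.sum_congr rfl fun i _ => by ring
    rw [h1, Finset.sum_add_distrib, Finset.sum_sub_distrib, ← Finset.mul_sum,
      ← Finset.mul_sum, hBeq, ← hT]
  have hKey : 0 ≤ σsq * B * T - σsq * B * B + ∑ i, d' i * (w' i * (v i - w' i)) := by
    rw [← hcrossid, hsplit, hwg]
    linarith
  have hq2 : ∑ i, d' i * (v i)^2
      = ∑ i, d' i * (w' i)^2 + 2*(∑ i, d' i * (w' i * (v i - w' i)))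
        + ∑ i, d' i * (v i - w' i)^2 := quad_expand1 d' w' v
  have hdvw : 0 ≤ ∑ i, d' i * (v i - w' i)^2 :=
    Finset.sum_nonneg fun i _ => mul_nonneg (hd'pos i).le (sq_nonneg _)
  have hdw2' : ∑ i, d' i * (w' i)^2 = ∑ i, δsq i * (w i)^2 := hdw2
  rw [hq2, hdw2', hlam]
  nlinarith [sq_nonneg (T - B), hσ.le, hKey, hdvw]
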